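/- For positive integers k1 < k2, the infimum of the set Δ0 = { Σ_{n≥1} 2(-1)^{n-1}/2^{a1+...+an} : each a_i ∈ {k1, k2} } equals 2(2^{k1} - 1)/(2^{k1+k2} - 1), attained by the alternating sequence a1=k2, a2=k1, a3=k2, .... -/

import Mathlib

open Filter Topology

/-- Partial sum `a 0 + ... + a n` of a digit sequence. -/
noncomputable def psum (a : ℕ → ℕ) (n : ℕ) : ℕ := ∑ i ∈ Finset.range (n + 1), a i

/-- Value of the alternating series `Σ_{n≥1} 2(-1)^{n-1}/2^{a1+...+an}`. -/
noncomputable def val (a : ℕ → ℕ) : ℝ := ∑' n : ℕ, (2 * (-1 : ℝ) ^ n) / 2 ^ (psum a n)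

/-- The set `Δ0` of all values of the alternating series over `K`-valued digit sequences. -/
noncomputable def Delta0 (K : Set ℕ) : Set ℝ :=
  { y | ∃ a : ℕ → ℕ, (∀ i, a i ∈ K) ∧ y = val a }

namespace InfD0

noncomputable def term (a : ℕ → ℕ) (n : ℕ) : ℝ := (2 * (-1 : ℝ) ^ n) / 2 ^ (psum a n)

lemma val_eq_tsum (a : ℕ → ℕ) : val a = ∑' n, term a n := rfl

lemma psum_zero (a : ℕ → ℕ) : psum a 0 = a 0 := by simp [psum]

lemma psum_succ (a : ℕ → ℕ) (n : ℕ) : psum a (n + 1) = psum a n + a (n + 1) := by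
  simp [psum, Finset.sum_range_succ]

lemma psum_shift (a : ℕ → ℕ) (n : ℕ) :
    psum a (n + 1) = a 0 + psum (fun i => a (i + 1)) n := by
  simp only [psum]
  rw [Finset.sum_range_succ' a (n + 1)]
  ring

lemma psum_ge (a : ℕ → ℕ) (h : ∀ i, 1 ≤ a i) (n : ℕ) : n + 1 ≤ psum a n := by
  induction n with
  | zero => simpa [psum_zero] using h 0
  | succ n ih => rw [psum_succ]; have := h (n + 1); omega

lemma summable_term (a : ℕ → ℕ) (h : ∀ i, 1 ≤ a i) : Summable (term a) := by
  apply Summable.of_norm_bounded (g := fun n => 2 * (1/2 : ℝ) ^ (n + 1))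
  · exact (summable_geometric_of_lt_one (by norm_num) (by norm_num)).mul_left 2 |>.comp_injective
      (add_left_injective 1)
  · intro n
    have h1 : (0:ℝ) < 2 ^ (psum a n) := by positivity
    have h2 : (2:ℝ) ^ (n + 1) ≤ 2 ^ (psum a n) :=
      pow_le_pow_right₀ (by norm_num) (psum_ge a h n)
    rw [term, norm_div, norm_mul]
    simp only [norm_pow, norm_neg, norm_one, one_pow, mul_one, Real.norm_ofNat,
      norm_pow, one_div, inv_pow]
    rw [div_le_iff₀ h1]
    calc (2:ℝ) = 2 * ((2:ℝ)^(n+1))⁻¹ * 2^(n+1) := by field_simp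
    _ ≤ 2 * ((2:ℝ)^(n+1))⁻¹ * 2^(psum a n) := by
        apply mul_le_mul_of_nonneg_left h2; positivity

lemma term_even (a : ℕ → ℕ) (k : ℕ) :
    term a (2 * k) = 2 / 2 ^ (psum a (2 * k)) := by
  simp [term, pow_mul]

lemma term_odd (a : ℕ → ℕ) (k : ℕ) :
    term a (2 * k + 1) = -(2 / 2 ^ (psum a (2 * k + 1))) := by
  simp [term, pow_succ, pow_mul, neg_div]

lemma val_nonneg (a : ℕ → ℕ) (h : ∀ i, 1 ≤ a i) : 0 ≤ val a := by
  have hs := summable_term a h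
  have he : Summable fun k => term a (2 * k) :=
    hs.comp_injective (fun x y hxy => by omega)
  have ho : Summable fun k => term a (2 * k + 1) :=
    hs.comp_injective (fun x y hxy => by omega)
  rw [val_eq_tsum, ← tsum_even_add_odd he ho, ← Summable.tsum_add he ho]
  apply tsum_nonneg
  intro k
  rw [term_even, term_odd]
  have h1 : (2:ℝ) ^ (psum a (2*k)) ≤ 2 ^ (psum a (2*k+1)) := by
    apply pow_le_pow_right₀ (by norm_num)
    rw [psum_succ]; omega
  have h2 : (0:ℝ) < 2 ^ (psum a (2*k)) := by positivity
  linarith [div_le_div_of_nonneg_left (by norm_num : (0:ℝ) ≤ 2) h2 h1]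

lemma val_recur (a : ℕ → ℕ) (h : ∀ i, 1 ≤ a i) :
    val a = (2 - val (fun n => a (n + 1))) / 2 ^ (a 0) := by
  have hs := summable_term a h
  rw [val_eq_tsum, Summable.tsum_eq_zero_add hs]
  have hterm0 : term a 0 = 2 / 2 ^ (a 0) := by simp [term, psum_zero]
  have hshift : ∀ n, term a (n + 1) =
      (-(1 / 2 ^ (a 0))) * term (fun i => a (i + 1)) n := by
    intro n
    rw [term, term, psum_shift, pow_add, pow_succ]
    field_simp
    ring
  calc term a 0 + ∑' n, term a (n + 1)
      = term a 0 + ∑' n, (-(1 / 2 ^ (a 0))) * term (fun i => a (i + 1)) n := by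
        congr 1; exact tsum_congr hshift
    _ = 2 / 2 ^ (a 0) + (-(1 / 2 ^ (a 0))) * val (fun i => a (i + 1)) := by
        rw [hterm0, tsum_mul_left]; rfl
    _ = (2 - val (fun n => a (n + 1))) / 2 ^ (a 0) := by
        have : (0:ℝ) < 2 ^ (a 0) := by positivity
        field_simp
        ring

lemma val_le_one (a : ℕ → ℕ) (h : ∀ i, 1 ≤ a i) : val a ≤ 1 := by
  have hrec := val_recur a h
  have hnn : 0 ≤ val (fun n => a (n + 1)) := val_nonneg _ (fun i => h (i + 1))
  have hp : (2:ℝ) ≤ 2 ^ (a 0) := by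
    calc (2:ℝ) = 2 ^ 1 := (pow_one 2).symm
    _ ≤ 2 ^ (a 0) := pow_le_pow_right₀ (by norm_num) (h 0)
  rw [hrec, div_le_one (by positivity)]
  linarith

end InfD0

open InfD0

theorem inf_Delta0 (k1 k2 : ℕ) (hk1 : 0 < k1) (hk : k1 < k2) :
    IsLeast (Delta0 {k1, k2}) (2 * ((2 : ℝ) ^ k1 - 1) / ((2 : ℝ) ^ (k1 + k2) - 1)) ∧
    val (fun n => if n % 2 = 0 then k2 else k1) =
      2 * ((2 : ℝ) ^ k1 - 1) / ((2 : ℝ) ^ (k1 + k2) - 1) := by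
  set b : ℕ → ℕ := fun n => if n % 2 = 0 then k2 else k1 with hb
  set c : ℝ := 2 * ((2 : ℝ) ^ k1 - 1) / ((2 : ℝ) ^ (k1 + k2) - 1) with hc
  have hP : (2:ℝ) ≤ 2 ^ k1 := by
    calc (2:ℝ) = 2 ^ 1 := (pow_one 2).symm
    _ ≤ _ := pow_le_pow_right₀ (by norm_num) hk1
  have hQ : (2:ℝ) ≤ 2 ^ k2 := by
    calc (2:ℝ) = 2 ^ 1 := (pow_one 2).symm
    _ ≤ _ := pow_le_pow_right₀ (by norm_num) (by omega)
  have hPQ : (2:ℝ) ^ (k1 + k2) = 2 ^ k1 * 2 ^ k2 := pow_add 2 k1 k2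
  have hden : (0:ℝ) < 2 ^ (k1 + k2) - 1 := by rw [hPQ]; nlinarith
  -- digits of b
  have hbmem : ∀ i, b i ∈ ({k1, k2} : Set ℕ) := by
    intro i; by_cases h : i % 2 = 0 <;> simp [hb, h]
  have hbone : ∀ i, 1 ≤ b i := by
    intro i; by_cases h : i % 2 = 0 <;> simp [hb, h] <;> omega
  -- value of b : val b = c
  have hshift2 : (fun n => b (n + 1 + 1)) = b := by
    funext n
    have : (n + 1 + 1) % 2 = n % 2 := by omega
    simp only [hb, this]
  have hb0 : b 0 = k2 := by simp [hb]
  have hb1 : b 1 = k1 := by simp [hb]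
  have hrec1 := val_recur b hbone
  have hrec2 := val_recur (fun n => b (n + 1)) (fun i => hbone (i + 1))
  rw [hshift2] at hrec2
  have hsb0 : (fun n => b (n + 1)) 0 = k1 := hb1
  rw [hb0] at hrec1
  rw [show b (0 + 1) = k1 from hsb0] at hrec2
  have hvalb : val b = c := by
    rw [hrec2] at hrec1
    have h1 : (0:ℝ) < 2 ^ k1 := by positivity
    have h2 : (0:ℝ) < 2 ^ k2 := by positivity
    have e2 : val b * 2 ^ k2 * 2 ^ k1 = 2 * 2 ^ k1 - (2 - val b) := by
      field_simp at hrec1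
      linarith
    rw [hc, eq_div_iff (ne_of_gt hden), hPQ]
    linear_combination e2
  refine ⟨⟨⟨b, hbmem, hvalb.symm⟩, ?_⟩, hvalb⟩
  -- lower bound
  intro y hy
  set S := Delta0 ({k1, k2} : Set ℕ)
  have hcase : ∀ a : ℕ → ℕ, (∀ i, a i ∈ ({k1, k2} : Set ℕ)) →
      ∀ i, a i = k1 ∨ a i = k2 := by
    intro a ha i
    simpa using ha i
  have hone : ∀ a : ℕ → ℕ, (∀ i, a i ∈ ({k1, k2} : Set ℕ)) → ∀ i, 1 ≤ a i := by
    intro a ha i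
    rcases hcase a ha i with h | h <;> omega
  have hSne : S.Nonempty := ⟨val b, b, hbmem, rfl⟩
  have hS01 : ∀ z ∈ S, 0 ≤ z ∧ z ≤ 1 := by
    rintro z ⟨a, ha, rfl⟩
    exact ⟨val_nonneg a (hone a ha), val_le_one a (hone a ha)⟩
  have hbdd_below : BddBelow S := ⟨0, fun z hz => (hS01 z hz).1⟩
  have hbdd_above : BddAbove S := ⟨1, fun z hz => (hS01 z hz).2⟩
  set m := sInf S
  set M := sSup S
  have hM1 : M ≤ 1 := csSup_le hSne (fun z hz => (hS01 z hz).2)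
  have hm0 : 0 ≤ m := le_csInf hSne (fun z hz => (hS01 z hz).1)
  -- shift stays in S
  have hshiftS : ∀ a : ℕ → ℕ, (∀ i, a i ∈ ({k1, k2} : Set ℕ)) →
      val (fun n => a (n + 1)) ∈ S := by
    intro a ha
    exact ⟨fun n => a (n + 1), fun i => ha (i + 1), rfl⟩
  -- step: M ≤ (2 - m)/2^k1
  have hMstep : M ≤ (2 - m) / 2 ^ k1 := by
    apply csSup_le hSne
    rintro z ⟨a, ha, rfl⟩
    rw [val_recur a (hone a ha)]
    have hσ := hshiftS a ha
    have h1 : m ≤ val (fun n => a (n + 1)) := csInf_le hbdd_below hσ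
    have h2 : val (fun n => a (n + 1)) ≤ 1 := (hS01 _ hσ).2
    have h3 : (2:ℝ) ^ k1 ≤ 2 ^ (a 0) := by
      apply pow_le_pow_right₀ (by norm_num)
      rcases hcase a ha 0 with h | h <;> omega
    exact div_le_div₀ (by linarith) (by linarith) (by positivity) h3
  -- step: (2 - M)/2^k2 ≤ m
  have hmstep : (2 - M) / 2 ^ k2 ≤ m := by
    apply le_csInf hSne
    rintro z ⟨a, ha, rfl⟩
    rw [val_recur a (hone a ha)]
    have hσ := hshiftS a ha
    have h1 : val (fun n => a (n + 1)) ≤ M := le_csSup hbdd_above hσ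
    have h3 : (2:ℝ) ^ (a 0) ≤ 2 ^ k2 := by
      apply pow_le_pow_right₀ (by norm_num)
      rcases hcase a ha 0 with h | h <;> omega
    have h0 : val (fun n => a (n + 1)) ≤ 1 := (hS01 _ hσ).2
    exact div_le_div₀ (by linarith) (by linarith) (by positivity) h3
  -- combine
  have hmc : c ≤ m := by
    have h1 : (0:ℝ) < 2 ^ k1 := by positivity
    have h2 : (0:ℝ) < 2 ^ k2 := by positivity
    have A : 2 - M ≤ m * 2 ^ k2 := (div_le_iff₀ h2).mp hmstep
    have B : M * 2 ^ k1 ≤ 2 - m := (le_div_iff₀ h1).mp hMstep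
    have A' : (2 - M) * 2 ^ k1 ≤ m * 2 ^ k2 * 2 ^ k1 :=
      mul_le_mul_of_nonneg_right A (le_of_lt h1)
    rw [hc, div_le_iff₀ hden, hPQ]
    nlinarith [A', B]
  have hym : m ≤ y := csInf_le hbdd_below hy
  linarith
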